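/- Let $n \geq 3$ and let $L : (\mathbb{Z}/n\mathbb{Z})^d \to \{C, A, T\}$ be a labeling. Define an occurrence of CAT as a pair $(x, v)$ with $x \in (\mathbb{Z}/n\mathbb{Z})^d$, $v \in \{-1,0,1\}^d \setminus \{0\}$, such that $L(x) = C$, $L(x+v) = A$, $L(x+2v) = T$. Then the number of occurrences of CAT is at most $(3^{d-1}/2) n^d$. -/

import Mathlib

open Finset

inductive Letter | C | A | T
deriving DecidableEq

namespace CatAux

def wv (n : ℕ) : Fin 3 → ZMod n := ![0, 1, -1]

def psi (n d : ℕ) (c : Fin d → Fin 3) : Fin d → ZMod n := fun j => wv n (c j)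

def negc : Fin 3 → Fin 3 := ![0, 2, 1]

lemma wv_negc (n : ℕ) (s : Fin 3) : wv n (negc s) = - wv n (s) := by
  fin_cases s <;> simp [wv, negc]

lemma negc_negc (s : Fin 3) : negc (negc s) = s := by fin_cases s <;> rfl

lemma psi_negc (n d : ℕ) (c : Fin d → Fin 3) : psi n d (negc ∘ c) = - psi n d c := by
  funext j; exact wv_negc n (c j)

variable {n : ℕ} [NeZero n]

noncomputable def Phi (n d : ℕ) [NeZero n] (g h : (Fin d → ZMod n) → ℝ) : ℝ :=
  ∑ y : Fin d → ZMod n, ∑ c : Fin d → Fin 3, g y * h (y + psi n d c)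

noncomputable def Nrm (n d : ℕ) [NeZero n] (g : (Fin d → ZMod n) → ℝ) : ℝ :=
  ∑ y : Fin d → ZMod n, (g y)^2

lemma Nrm_nonneg (d : ℕ) (g : (Fin d → ZMod n) → ℝ) : 0 ≤ Nrm n d g :=
  Finset.sum_nonneg fun y _ => sq_nonneg _

lemma sum_shift (d : ℕ) (v : Fin d → ZMod n) (F : (Fin d → ZMod n) → ℝ) :
    ∑ y : Fin d → ZMod n, F (y + v) = ∑ y : Fin d → ZMod n, F y :=
  Fintype.sum_equiv (Equiv.addRight v) _ _ (fun _ => rfl)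

lemma Phi_symm (d : ℕ) (g h : (Fin d → ZMod n) → ℝ) : Phi n d g h = Phi n d h g := by
  rw [Phi, Phi, Finset.sum_comm]
  nth_rewrite 2 [Finset.sum_comm]
  have step1 : ∀ c : Fin d → Fin 3,
      ∑ y : Fin d → ZMod n, g y * h (y + psi n d c)
        = ∑ y : Fin d → ZMod n, h y * g (y + psi n d (negc ∘ c)) := by
    intro c
    rw [psi_negc]
    calc ∑ y : Fin d → ZMod n, g y * h (y + psi n d c)
        = ∑ y : Fin d → ZMod n, g ((y + psi n d c) + (- psi n d c)) * h (y + psi n d c) := by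
          apply Finset.sum_congr rfl; intro y _; congr 2; abel
      _ = ∑ y : Fin d → ZMod n, g (y + (- psi n d c)) * h y := by
          exact sum_shift d (psi n d c) (fun z => g (z + (- psi n d c)) * h z)
      _ = ∑ y : Fin d → ZMod n, h y * g (y + - psi n d c) := by
          apply Finset.sum_congr rfl; intro y _; ring
  rw [Finset.sum_congr rfl (fun c _ => step1 c)]
  have inv : Function.Involutive (fun c : Fin d → Fin 3 => negc ∘ c) := by
    intro c; funext j; exact negc_negc (c j)
  exact Fintype.sum_equiv inv.toPerm _ _ (fun c => by
    simp only [Function.Involutive.coe_toPerm])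

lemma Phi_add_add (d : ℕ) (g h : (Fin d → ZMod n) → ℝ) :
    Phi n d (fun y => g y + h y) (fun y => g y + h y)
      = Phi n d g g + 2 * Phi n d g h + Phi n d h h := by
  have expand : ∀ y c, (g y + h y) * ((fun y => g y + h y) (y + psi n d c))
      = g y * g (y + psi n d c) + (g y * h (y + psi n d c) + h y * g (y + psi n d c))
        + h y * h (y + psi n d c) := by intro y c; simp only; ring
  have : Phi n d (fun y => g y + h y) (fun y => g y + h y)
      = Phi n d g g + (Phi n d g h + Phi n d h g) + Phi n d h h := by
    rw [Phi, Phi, Phi, Phi, Phi, ← Finset.sum_add_distrib, ← Finset.sum_add_distrib,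
      ← Finset.sum_add_distrib]
    refine Finset.sum_congr rfl fun y _ => ?_
    rw [← Finset.sum_add_distrib, ← Finset.sum_add_distrib, ← Finset.sum_add_distrib]
    exact Finset.sum_congr rfl fun c _ => expand y c
  rw [this, Phi_symm d h g]; ring

lemma Phi_sub_sub (d : ℕ) (g h : (Fin d → ZMod n) → ℝ) :
    Phi n d (fun y => g y - h y) (fun y => g y - h y)
      = Phi n d g g - 2 * Phi n d g h + Phi n d h h := by
  have expand : ∀ y c, (g y - h y) * ((fun y => g y - h y) (y + psi n d c))
      = g y * g (y + psi n d c) - (g y * h (y + psi n d c) + h y * g (y + psi n d c))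
        + h y * h (y + psi n d c) := by intro y c; simp only; ring
  have : Phi n d (fun y => g y - h y) (fun y => g y - h y)
      = Phi n d g g - (Phi n d g h + Phi n d h g) + Phi n d h h := by
    rw [Phi, Phi, Phi, Phi, Phi]
    rw [← Finset.sum_add_distrib, ← Finset.sum_sub_distrib, ← Finset.sum_add_distrib]
    refine Finset.sum_congr rfl fun y _ => ?_
    rw [← Finset.sum_add_distrib, ← Finset.sum_sub_distrib, ← Finset.sum_add_distrib]
    exact Finset.sum_congr rfl fun c _ => expand y c
  rw [this, Phi_symm d h g]; ring

lemma cons_add_cons (d : ℕ) (t s : ZMod n) (y z : Fin d → ZMod n) :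
    (Fin.cons t y : Fin (d+1) → ZMod n) + Fin.cons s z = Fin.cons (t+s) (y+z) := by
  funext i
  refine Fin.cases ?_ (fun i => ?_) i <;> simp

lemma psi_cons (d : ℕ) (s : Fin 3) (c : Fin d → Fin 3) :
    psi n (d+1) (Fin.cons s c) = Fin.cons (wv n s) (psi n d c) := by
  funext i
  refine Fin.cases ?_ (fun i => ?_) i <;> simp [psi]

lemma sum_pi_succ (d : ℕ) (φ : (Fin (d+1) → ZMod n) → ℝ) :
    ∑ x, φ x = ∑ t : ZMod n, ∑ y : Fin d → ZMod n, φ (Fin.cons t y) := by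
  calc ∑ x, φ x = ∑ p : ZMod n × (Fin d → ZMod n), φ (Fin.cons p.1 p.2) :=
        (Fintype.sum_equiv (Fin.consEquiv fun _ => ZMod n) _ _ (fun p => rfl)).symm
    _ = ∑ t : ZMod n, ∑ y : Fin d → ZMod n, φ (Fin.cons t y) := Fintype.sum_prod_type _

lemma sum_pi3_succ (d : ℕ) (φ : (Fin (d+1) → Fin 3) → ℝ) :
    ∑ x, φ x = ∑ s : Fin 3, ∑ c : Fin d → Fin 3, φ (Fin.cons s c) := by
  calc ∑ x, φ x = ∑ p : Fin 3 × (Fin d → Fin 3), φ (Fin.cons p.1 p.2) :=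
        (Fintype.sum_equiv (Fin.consEquiv fun _ => Fin 3) _ _ (fun p => rfl)).symm
    _ = ∑ s : Fin 3, ∑ c : Fin d → Fin 3, φ (Fin.cons s c) := Fintype.sum_prod_type _

lemma sum_zmod_shift (g : ZMod n → ℝ) (a : ZMod n) : ∑ t : ZMod n, g (t + a) = ∑ t, g t :=
  Fintype.sum_equiv (Equiv.addRight a) _ _ (fun _ => rfl)

lemma Phi_succ (d : ℕ) (f : (Fin (d+1) → ZMod n) → ℝ) :
    Phi n (d+1) f f = ∑ t : ZMod n,
      (Phi n d (fun y => f (Fin.cons t y)) (fun y => f (Fin.cons t y))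
        + 2 * Phi n d (fun y => f (Fin.cons t y)) (fun y => f (Fin.cons (t+1) y))) := by
  set F : ZMod n → (Fin d → ZMod n) → ℝ := fun t y => f (Fin.cons t y) with hF
  have wv0 : wv n 0 = 0 := rfl
  have wv1 : wv n 1 = 1 := rfl
  have wv2 : wv n 2 = -1 := rfl
  have step1 : Phi n (d+1) f f
      = ∑ t : ZMod n, ∑ s : Fin 3, Phi n d (F t) (F (t + wv n s)) := by
    rw [Phi]
    refine (sum_pi_succ d (fun x => ∑ c : Fin (d+1) → Fin 3, f x * f (x + psi n (d+1) c))).trans ?_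
    refine Finset.sum_congr rfl fun t _ => ?_
    have inner : ∀ y : Fin d → ZMod n,
        (∑ c : Fin (d+1) → Fin 3, f (Fin.cons t y) * f (Fin.cons t y + psi n (d+1) c))
        = ∑ s : Fin 3, ∑ c : Fin d → Fin 3, F t y * F (t + wv n s) (y + psi n d c) := by
      intro y
      refine (sum_pi3_succ d (fun c => f (Fin.cons t y) * f (Fin.cons t y + psi n (d+1) c))).trans ?_
      refine Finset.sum_congr rfl fun s _ => Finset.sum_congr rfl fun c _ => ?_
      show f (Fin.cons t y) * f (Fin.cons t y + psi n (d+1) (Fin.cons s c)) = _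
      rw [psi_cons, cons_add_cons]
    rw [Finset.sum_congr rfl (fun y _ => inner y), Finset.sum_comm]
    exact Finset.sum_congr rfl fun s _ => rfl
  rw [step1]
  have step2 : ∀ t : ZMod n, ∑ s : Fin 3, Phi n d (F t) (F (t + wv n s))
      = Phi n d (F t) (F t) + Phi n d (F t) (F (t+1)) + Phi n d (F t) (F (t + -1)) := by
    intro t
    rw [Fin.sum_univ_three, wv0, wv1, wv2, add_zero]
  rw [Finset.sum_congr rfl (fun t _ => step2 t)]
  rw [Finset.sum_add_distrib, Finset.sum_add_distrib, Finset.sum_add_distrib]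
  have step3 : ∑ t : ZMod n, Phi n d (F t) (F (t + -1))
      = ∑ t : ZMod n, Phi n d (F t) (F (t + 1)) := by
    have := sum_zmod_shift (n := n) (fun t => Phi n d (F t) (F (t + -1))) 1
    rw [← this]
    refine Finset.sum_congr rfl fun t _ => ?_
    rw [show t + 1 + -1 = t by ring, Phi_symm]
  rw [step3]
  show _ = (∑ x : ZMod n, Phi n d (F x) (F x)) + ∑ x : ZMod n, 2 * Phi n d (F x) (F (x+1))
  rw [show (∑ x : ZMod n, 2 * Phi n d (F x) (F (x+1)))
      = 2 * ∑ x : ZMod n, Phi n d (F x) (F (x+1)) from (Finset.mul_sum _ _ _).symm]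
  ring

lemma Nrm_succ (d : ℕ) (f : (Fin (d+1) → ZMod n) → ℝ) :
    Nrm n (d+1) f = ∑ t : ZMod n, Nrm n d (fun y => f (Fin.cons t y)) := by
  rw [Nrm]
  exact sum_pi_succ d (fun x => (f x)^2)

lemma Nrm_add_sub (d : ℕ) (g h : (Fin d → ZMod n) → ℝ) :
    Nrm n d (fun y => g y + h y) + Nrm n d (fun y => g y - h y)
      = 2 * Nrm n d g + 2 * Nrm n d h := by
  simp only [Nrm, ← Finset.sum_add_distrib, Finset.mul_sum]
  exact Finset.sum_congr rfl fun y _ => by ring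

theorem Phi_bounds (d : ℕ) (f : (Fin d → ZMod n) → ℝ) :
    -((3:ℝ)^d / 3) * Nrm n d f ≤ Phi n d f f ∧ Phi n d f f ≤ (3:ℝ)^d * Nrm n d f := by
  induction d with
  | zero =>
    have h0 : ∀ (y : Fin 0 → ZMod n) (c : Fin 0 → Fin 3), y + psi n 0 c = y := by
      intro y c; funext j; exact j.elim0
    have : Phi n 0 f f = Nrm n 0 f := by
      rw [Phi, Nrm]
      refine Finset.sum_congr rfl fun y _ => ?_
      rw [Fintype.sum_unique (fun c : Fin 0 → Fin 3 => f y * f (y + psi n 0 c))]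
      rw [h0, sq]
    rw [this]
    have hN := Nrm_nonneg (n := n) 0 f
    constructor <;> nlinarith [hN]
  | succ d ih =>
    set F : ZMod n → (Fin d → ZMod n) → ℝ := fun t y => f (Fin.cons t y) with hF
    set P : ZMod n → (Fin d → ZMod n) → ℝ := fun t y => F t y + F (t+1) y with hP
    set M : ZMod n → (Fin d → ZMod n) → ℝ := fun t y => F t y - F (t+1) y with hM
    have hsucc : Phi n (d+1) f f
        = ∑ t : ZMod n, (Phi n d (F t) (F t) + 2 * Phi n d (F t) (F (t+1))) := Phi_succ d f
    have hPP : ∀ t, Phi n d (P t) (P t)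
        = Phi n d (F t) (F t) + 2 * Phi n d (F t) (F (t+1)) + Phi n d (F (t+1)) (F (t+1)) :=
      fun t => Phi_add_add d (F t) (F (t+1))
    have hMM : ∀ t, Phi n d (M t) (M t)
        = Phi n d (F t) (F t) - 2 * Phi n d (F t) (F (t+1)) + Phi n d (F (t+1)) (F (t+1)) :=
      fun t => Phi_sub_sub d (F t) (F (t+1))
    have shiftA : ∑ t : ZMod n, Phi n d (F (t+1)) (F (t+1)) = ∑ t : ZMod n, Phi n d (F t) (F t) :=
      sum_zmod_shift (fun t => Phi n d (F t) (F t)) 1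
    have shiftN : ∑ t : ZMod n, Nrm n d (F (t+1)) = ∑ t : ZMod n, Nrm n d (F t) :=
      sum_zmod_shift (fun t => Nrm n d (F t)) 1
    set Sa := ∑ t : ZMod n, Phi n d (F t) (F t) with hSa
    set Sb := ∑ t : ZMod n, Phi n d (F t) (F (t+1)) with hSb
    have eP : ∑ t : ZMod n, Phi n d (P t) (P t) = 2 * Sa + 2 * Sb := by
      rw [Finset.sum_congr rfl (fun t (_ : t ∈ univ) => hPP t), Finset.sum_add_distrib,
        Finset.sum_add_distrib, shiftA,
        show (∑ t : ZMod n, 2 * Phi n d (F t) (F (t+1))) = 2 * Sb from (Finset.mul_sum _ _ _).symm]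
      ring
    have eM : ∑ t : ZMod n, Phi n d (M t) (M t) = 2 * Sa - 2 * Sb := by
      rw [Finset.sum_congr rfl (fun t (_ : t ∈ univ) => hMM t), Finset.sum_add_distrib,
        Finset.sum_sub_distrib, shiftA,
        show (∑ t : ZMod n, 2 * Phi n d (F t) (F (t+1))) = 2 * Sb from (Finset.mul_sum _ _ _).symm]
      ring
    have ePhi : Phi n (d+1) f f = Sa + 2 * Sb := by
      rw [hsucc, Finset.sum_add_distrib,
        show (∑ t : ZMod n, 2 * Phi n d (F t) (F (t+1))) = 2 * Sb from (Finset.mul_sum _ _ _).symm]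
    have key : 4 * Phi n (d+1) f f
        = 3 * (∑ t : ZMod n, Phi n d (P t) (P t)) - ∑ t : ZMod n, Phi n d (M t) (M t) := by
      rw [eP, eM, ePhi]; ring
    have nrmkey : (∑ t : ZMod n, Nrm n d (P t)) + (∑ t : ZMod n, Nrm n d (M t))
        = 4 * Nrm n (d+1) f := by
      rw [← Finset.sum_add_distrib, Nrm_succ,
        Finset.sum_congr rfl (fun t (_ : t ∈ univ) => Nrm_add_sub d (F t) (F (t+1))),
        Finset.sum_add_distrib]
      rw [show (∑ t : ZMod n, 2 * Nrm n d (F t)) = 2 * ∑ t : ZMod n, Nrm n d (F t) from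
        (Finset.mul_sum _ _ _).symm,
        show (∑ t : ZMod n, 2 * Nrm n d (F (t+1))) = 2 * ∑ t : ZMod n, Nrm n d (F (t+1)) from
        (Finset.mul_sum _ _ _).symm, shiftN]
      ring
    have hNP : 0 ≤ ∑ t : ZMod n, Nrm n d (P t) := Finset.sum_nonneg fun t _ => Nrm_nonneg d _
    have hNM : 0 ≤ ∑ t : ZMod n, Nrm n d (M t) := Finset.sum_nonneg fun t _ => Nrm_nonneg d _
    have SPlow : -((3:ℝ)^d/3) * (∑ t : ZMod n, Nrm n d (P t)) ≤ ∑ t : ZMod n, Phi n d (P t) (P t) := by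
      rw [Finset.mul_sum]
      exact Finset.sum_le_sum fun t _ => (ih (P t)).1
    have SPhigh : (∑ t : ZMod n, Phi n d (P t) (P t)) ≤ (3:ℝ)^d * ∑ t : ZMod n, Nrm n d (P t) := by
      rw [Finset.mul_sum]
      exact Finset.sum_le_sum fun t _ => (ih (P t)).2
    have SMlow : -((3:ℝ)^d/3) * (∑ t : ZMod n, Nrm n d (M t)) ≤ ∑ t : ZMod n, Phi n d (M t) (M t) := by
      rw [Finset.mul_sum]
      exact Finset.sum_le_sum fun t _ => (ih (M t)).1
    have SMhigh : (∑ t : ZMod n, Phi n d (M t) (M t)) ≤ (3:ℝ)^d * ∑ t : ZMod n, Nrm n d (M t) := by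
      rw [Finset.mul_sum]
      exact Finset.sum_le_sum fun t _ => (ih (M t)).2
    set c3 := (3:ℝ)^d with hc3def
    set NP := ∑ t : ZMod n, Nrm n d (P t)
    set NM := ∑ t : ZMod n, Nrm n d (M t)
    set Nf := Nrm n (d+1) f
    have E1 : 3 * (c3/3 * NP) = c3 * NP := by ring
    have E1M : 3 * (c3/3 * NM) = c3 * NM := by ring
    have E2 : c3 * NP + c3 * NM = 4 * (c3 * Nf) := by linear_combination c3 * nrmkey
    have E3 : (3:ℝ)^(d+1)/3 * Nf = c3 * Nf := by rw [hc3def]; ring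
    have E4 : (3:ℝ)^(d+1) * Nf = 3 * (c3 * Nf) := by rw [hc3def]; ring
    have hc3 : (0:ℝ) ≤ c3 := by rw [hc3def]; positivity
    have aNM : 0 ≤ c3 * NM := mul_nonneg hc3 hNM
    have aNP : 0 ≤ c3 * NP := mul_nonneg hc3 hNP
    constructor
    · linarith [key, SPlow, SMhigh, E1, E1M, E2, E3]
    · linarith [key, SPhigh, SMlow, E1, E1M, E2, E4, aNM, aNP]

-- distinctness of 0, 1, -1 in ZMod n for n ≥ 3
lemma zmod_facts (hn : 3 ≤ n) :
    (1 : ZMod n) ≠ 0 ∧ (-1 : ZMod n) ≠ 0 ∧ (-1 : ZMod n) ≠ 1 := by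
  have h2 : ((2:ℕ) : ZMod n) ≠ 0 := by
    simp only [ne_eq, ZMod.natCast_eq_zero_iff]
    intro h; have := Nat.le_of_dvd (by norm_num) h; omega
  have h1 : ((1:ℕ) : ZMod n) ≠ 0 := by
    simp only [ne_eq, ZMod.natCast_eq_zero_iff]
    intro h; have := Nat.le_of_dvd (by norm_num) h; omega
  push_cast at h1 h2
  refine ⟨h1, ?_, ?_⟩
  · intro h; apply h1; rw [← neg_neg (1:ZMod n), h, neg_zero]
  · intro h; apply h2; linear_combination -h

def invc (n d : ℕ) [NeZero n] (v : Fin d → ZMod n) : Fin d → Fin 3 :=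
  fun j => if v j = 0 then 0 else if v j = 1 then 1 else 2

lemma psi_invc (hn : 3 ≤ n) {d : ℕ} (v : Fin d → ZMod n)
    (hv : ∀ j, v j = 0 ∨ v j = 1 ∨ v j = -1) : psi n d (invc n d v) = v := by
  obtain ⟨h1, hm1, hm11⟩ := zmod_facts hn
  funext j
  show wv n (invc n d v j) = v j
  rcases hv j with h | h | h
  · have hc : invc n d v j = 0 := by simp [invc, h]
    rw [hc, h]; rfl
  · have hc : invc n d v j = 1 := by simp [invc, h, h1]
    rw [hc, h]; rfl
  · have t0 : v j ≠ 0 := by rw [h]; exact hm1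
    have t1 : v j ≠ 1 := by rw [h]; exact hm11
    have hc : invc n d v j = 2 := by simp [invc, t0, t1]
    rw [hc, h]; rfl

lemma pred_neg {d : ℕ} (v : Fin d → ZMod n) (hv : ∀ j, v j = 0 ∨ v j = 1 ∨ v j = -1) :
    ∀ j, (-v) j = 0 ∨ (-v) j = 1 ∨ (-v) j = -1 := by
  intro j
  rcases hv j with h | h | h
  · left; simp [h]
  · right; right; simp [h]
  · right; left; simp [h]

section Main

variable (d : ℕ) (L : (Fin d → ZMod n) → Letter)

noncomputable def fA : (Fin d → ZMod n) → ℝ := fun x => if L x = Letter.A then 1 else -1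

lemma nrm_fA : Nrm n d (fA d L) = (n:ℝ)^d := by
  have h1 : ∀ x : Fin d → ZMod n, (fA d L x)^2 = 1 := by
    intro x; rw [fA]; split_ifs <;> norm_num
  rw [Nrm, Finset.sum_congr rfl (fun x _ => h1 x), Finset.sum_const, Finset.card_univ]
  simp [ZMod.card]

-- the cut set
def DsetC (n d : ℕ) [NeZero n] (L : (Fin d → ZMod n) → Letter) :
    Finset ((Fin d → ZMod n) × (Fin d → Fin 3)) :=
  univ.filter (fun q => ¬ (L q.1 = Letter.A) ∧ L (q.1 + psi n d q.2) = Letter.A)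

lemma phi_fA_eq : Phi n d (fA d L) (fA d L)
    = (n:ℝ)^d * 3^d - 4 * ((DsetC n d L).card : ℝ) := by
  have point : ∀ y z : Fin d → ZMod n, fA d L y * fA d L z
      = 1 - 2 * (if ¬ (L y = Letter.A) ∧ L z = Letter.A then (1:ℝ) else 0)
          - 2 * (if L y = Letter.A ∧ ¬ (L z = Letter.A) then (1:ℝ) else 0) := by
    intro y z
    simp only [fA]
    by_cases hy : L y = Letter.A <;> by_cases hz : L z = Letter.A <;>
      simp [hy, hz] <;> norm_num
  have expand : Phi n d (fA d L) (fA d L)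
      = ∑ q : (Fin d → ZMod n) × (Fin d → Fin 3),
          (1 - 2 * (if ¬ (L q.1 = Letter.A) ∧ L (q.1 + psi n d q.2) = Letter.A then (1:ℝ) else 0)
             - 2 * (if L q.1 = Letter.A ∧ ¬ (L (q.1 + psi n d q.2) = Letter.A) then (1:ℝ) else 0)) := by
    rw [Phi]
    refine Eq.trans ((Fintype.sum_prod_type
      (f := fun q : (Fin d → ZMod n) × (Fin d → Fin 3) =>
        fA d L q.1 * fA d L (q.1 + psi n d q.2))).symm) ?_
    exact Finset.sum_congr rfl fun q _ => point q.1 (q.1 + psi n d q.2)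
  rw [expand, Finset.sum_sub_distrib, Finset.sum_sub_distrib]
  have c1 : ∑ _q : (Fin d → ZMod n) × (Fin d → Fin 3), (1:ℝ) = (n:ℝ)^d * 3^d := by
    rw [Finset.sum_const, Finset.card_univ]
    simp [ZMod.card, mul_pow]
  have c2 : ∑ q : (Fin d → ZMod n) × (Fin d → Fin 3),
      (2:ℝ) * (if ¬ (L q.1 = Letter.A) ∧ L (q.1 + psi n d q.2) = Letter.A then (1:ℝ) else 0)
      = 2 * ((DsetC n d L).card : ℝ) := by
    rw [← Finset.mul_sum, Finset.sum_boole, DsetC]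
  -- involution swapping the two orientations
  have hinvol : Function.Involutive
      (fun q : (Fin d → ZMod n) × (Fin d → Fin 3) => (q.1 + psi n d q.2, negc ∘ q.2)) := by
    intro q
    refine Prod.ext ?_ ?_
    · show q.1 + psi n d q.2 + psi n d (negc ∘ q.2) = q.1
      rw [psi_negc]; abel
    · show negc ∘ (negc ∘ q.2) = q.2
      funext j; exact negc_negc (q.2 j)
  have c3 : ∑ q : (Fin d → ZMod n) × (Fin d → Fin 3),
      (2:ℝ) * (if L q.1 = Letter.A ∧ ¬ (L (q.1 + psi n d q.2) = Letter.A) then (1:ℝ) else 0)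
      = 2 * ((DsetC n d L).card : ℝ) := by
    rw [← c2]
    refine Fintype.sum_equiv hinvol.toPerm _ _ (fun q => ?_)
    simp only [Function.Involutive.coe_toPerm]
    have hpt : (q.1 + psi n d q.2) + psi n d (negc ∘ q.2) = q.1 := by
      rw [psi_negc]; abel
    have cond_iff : (L q.1 = Letter.A ∧ ¬ (L (q.1 + psi n d q.2) = Letter.A))
        ↔ (¬ (L (q.1 + psi n d q.2) = Letter.A)
            ∧ L ((q.1 + psi n d q.2) + psi n d (negc ∘ q.2)) = Letter.A) := by
      rw [hpt]; exact and_comm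
    exact congrArg (fun r : ℝ => 2 * r) (if_congr cond_iff rfl rfl)
  rw [c1, c2, c3]
  ring

def OccSet (n d : ℕ) [NeZero n] (L : (Fin d → ZMod n) → Letter) :
    Finset ((Fin d → ZMod n) × (Fin d → ZMod n)) :=
  Finset.univ.filter
    (fun p : (Fin d → ZMod n) × (Fin d → ZMod n) =>
      (∀ j, p.2 j = 0 ∨ p.2 j = 1 ∨ p.2 j = -1) ∧ p.2 ≠ 0 ∧
      L p.1 = Letter.C ∧ L (p.1 + p.2) = Letter.A ∧
      L (p.1 + 2 • p.2) = Letter.T)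

lemma occ_le_cut (hn : 3 ≤ n) : 2 * (OccSet n d L).card ≤ (DsetC n d L).card := by
  have hCA : Letter.C ≠ Letter.A := by decide
  have hTA : Letter.T ≠ Letter.A := by decide
  have hCT : Letter.C ≠ Letter.T := by decide
  set f : (((Fin d → ZMod n) × (Fin d → ZMod n)) × Bool) →
      ((Fin d → ZMod n) × (Fin d → Fin 3)) :=
    fun q => if q.2 then (q.1.1, invc n d q.1.2)
      else (q.1.1 + 2 • q.1.2, invc n d (- q.1.2)) with hf
  have key : ((OccSet n d L) ×ˢ (univ : Finset Bool)).card ≤ (DsetC n d L).card := by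
    apply Finset.card_le_card_of_injOn f
    · -- maps to
      rintro ⟨⟨x, v⟩, b⟩ hmem
      obtain ⟨hocc, -⟩ := Finset.mem_product.mp hmem
      obtain ⟨-, hpred, hne, hC, hA, hT⟩ := Finset.mem_filter.mp hocc
      rw [Finset.mem_coe, DsetC, Finset.mem_filter]
      refine ⟨Finset.mem_univ _, ?_⟩
      cases b with
      | true =>
        simp only [hf, if_true]
        constructor
        · show ¬ (L x = Letter.A)
          rw [hC]; exact hCA
        · show L (x + psi n d (invc n d v)) = Letter.A
          rw [psi_invc hn v hpred]; exact hA
      | false =>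
        simp only [hf, Bool.false_eq_true, if_false]
        constructor
        · show ¬ (L (x + 2 • v) = Letter.A)
          rw [hT]; exact hTA
        · show L ((x + 2 • v) + psi n d (invc n d (- v))) = Letter.A
          rw [psi_invc hn (-v) (pred_neg v hpred)]
          have : (x + 2 • v) + (-v) = x + v := by
            rw [two_nsmul]; abel
          rw [this]; exact hA
    · -- injective on
      rintro ⟨⟨x, v⟩, b⟩ hmem ⟨⟨x', v'⟩, b'⟩ hmem' heq
      obtain ⟨hocc, -⟩ := Finset.mem_product.mp hmem
      obtain ⟨-, hpred, hne, hC, hA, hT⟩ := Finset.mem_filter.mp hocc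
      obtain ⟨hocc', -⟩ := Finset.mem_product.mp hmem'
      obtain ⟨-, hpred', hne', hC', hA', hT'⟩ := Finset.mem_filter.mp hocc'
      have recov : ∀ (y w : Fin d → ZMod n) (c : Bool),
          (∀ j, w j = 0 ∨ w j = 1 ∨ w j = -1) →
          (if c then (y, invc n d w) else (y + 2 • w, invc n d (- w))).2
            = invc n d (if c then w else -w) := by
        intro y w c hw; cases c <;> rfl
      -- first : b = b'
      have hb : b = b' := by
        by_contra hbb
        have h1 : L (f ((x,v),b)).1 = L (f ((x',v'),b')).1 := by rw [heq]
        cases b with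
        | true =>
          cases b' with
          | true => exact hbb rfl
          | false =>
            simp only [hf, if_true, Bool.false_eq_true, if_false] at h1
            rw [hC, hT'] at h1; exact hCT h1
        | false =>
          cases b' with
          | false => exact hbb rfl
          | true =>
            simp only [hf, if_true, Bool.false_eq_true, if_false] at h1
            rw [hT, hC'] at h1; exact hCT h1.symm
      subst hb
      cases b with
      | true =>
        simp only [hf, if_true, Prod.mk.injEq] at heq
        obtain ⟨h1, h2⟩ := heq
        have hv : v = v' := by
          have := congrArg (psi n d) h2
          rwa [psi_invc hn v hpred, psi_invc hn v' hpred'] at this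
        simp [h1, hv]
      | false =>
        simp only [hf, Bool.false_eq_true, if_false, Prod.mk.injEq] at heq
        obtain ⟨h1, h2⟩ := heq
        have hv : -v = -v' := by
          have := congrArg (psi n d) h2
          rwa [psi_invc hn (-v) (pred_neg v hpred), psi_invc hn (-v') (pred_neg v' hpred')] at this
        have hv2 : v = v' := by
          have := congrArg Neg.neg hv
          rwa [neg_neg, neg_neg] at this
        have hx : x = x' := by
          rw [hv2] at h1
          exact add_right_cancel h1
        simp [hx, hv2]
  calc 2 * (OccSet n d L).card = ((OccSet n d L) ×ˢ (univ : Finset Bool)).card := by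
        rw [Finset.card_product, Finset.card_univ, Fintype.card_bool, mul_comm]
    _ ≤ (DsetC n d L).card := key

end Main
end CatAux

theorem stmt_10 (n d : ℕ) [NeZero n] (hn : 3 ≤ n)
    (L : (Fin d → ZMod n) → Letter) :
    ((Finset.univ.filter
        (fun p : (Fin d → ZMod n) × (Fin d → ZMod n) =>
          (∀ j, p.2 j = 0 ∨ p.2 j = 1 ∨ p.2 j = -1) ∧ p.2 ≠ 0 ∧
          L p.1 = Letter.C ∧ L (p.1 + p.2) = Letter.A ∧
          L (p.1 + 2 • p.2) = Letter.T)).card : ℝ)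
      ≤ 3 ^ (d - 1) * n ^ d / 2 := by
  have hOccEq : (Finset.univ.filter
        (fun p : (Fin d → ZMod n) × (Fin d → ZMod n) =>
          (∀ j, p.2 j = 0 ∨ p.2 j = 1 ∨ p.2 j = -1) ∧ p.2 ≠ 0 ∧
          L p.1 = Letter.C ∧ L (p.1 + p.2) = Letter.A ∧
          L (p.1 + 2 • p.2) = Letter.T)) = CatAux.OccSet n d L := rfl
  rw [hOccEq]
  cases d with
  | zero =>
    have hempty : CatAux.OccSet n 0 L = ∅ := by
      rw [CatAux.OccSet, Finset.filter_eq_empty_iff]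
      rintro p -
      rintro ⟨-, hne, -⟩
      exact hne (funext fun j => j.elim0)
    rw [hempty]
    norm_num
  | succ m =>
    have h2 := CatAux.occ_le_cut (m+1) L hn
    have hD : ((CatAux.DsetC n (m+1) L).card : ℝ) ≤ (3:ℝ)^m * (n:ℝ)^(m+1) := by
      have hphi := (CatAux.Phi_bounds (m+1) (CatAux.fA (m+1) L)).1
      rw [CatAux.nrm_fA, CatAux.phi_fA_eq] at hphi
      have E1 : (3:ℝ)^(m+1)/3 * (n:ℝ)^(m+1) = 3^m * (n:ℝ)^(m+1) := by ring
      have E2 : (n:ℝ)^(m+1) * (3:ℝ)^(m+1) = 3 * ((3:ℝ)^m * (n:ℝ)^(m+1)) := by ring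
      linarith
    have hcast : 2 * ((CatAux.OccSet n (m+1) L).card : ℝ)
        ≤ ((CatAux.DsetC n (m+1) L).card : ℝ) := by exact_mod_cast h2
    have hm : m + 1 - 1 = m := rfl
    rw [hm]
    linarith
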